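/- Suppose Γ is a sub-variation of g-kPATH (k = 2 or 3). For configurations C = p_r…p_s and C' of Γ, a node v = p_u ∈ C with d_C(p_0, v) ≤ t, one has C ≡'_{t,v} C' if and only if C' is a consistent extension of M(v,t,C); that is, for path configurations the condition M(v,t,C') \ M(v,t,C) = ∅ follows automatically from consistency. -/

import Mathlib

open scoped Classical

/-- Two positions of the k-dimensional grid are adjacent iff their L1 distance is 1. -/
def adjK {k : ℕ} (p q : Fin k → ℤ) : Prop := ∑ i, |p i - q i| = 1

lemma adjK_symm {k : ℕ} {p q : Fin k → ℤ} (h : adjK p q) : adjK q p := by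
  unfold adjK at h ⊢
  rw [← h]
  exact Finset.sum_congr rfl fun i _ => abs_sub_comm _ _

lemma adjK_irrefl {k : ℕ} (p : Fin k → ℤ) : ¬ adjK p p := by simp [adjK]

/-- The graph induced on a set `X` of grid positions. -/
def gridGraphK {k : ℕ} (X : Set (Fin k → ℤ)) : SimpleGraph (Fin k → ℤ) where
  Adj p q := p ∈ X ∧ q ∈ X ∧ adjK p q
  symm := ⟨fun p q h => ⟨h.2.1, h.1, adjK_symm h.2.2⟩⟩
  loopless := ⟨fun p h => adjK_irrefl p h.2.2⟩

/-- Graph distance inside `X`. -/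
noncomputable def gdistK {k : ℕ} (X : Set (Fin k → ℤ)) (p q : Fin k → ℤ) : ℕ :=
  (gridGraphK X).dist p q

/-- Boundary condition: the set of the `2k` neighbors of `p` that lie in `X`. -/
def bcondK {k : ℕ} (X : Set (Fin k → ℤ)) (p : Fin k → ℤ) : Set (Fin k → ℤ) :=
  {q ∈ X | adjK p q}

noncomputable def MsetK {k : ℕ} (v : Fin k → ℤ) (t : ℕ) (X : Set (Fin k → ℤ)) :
    Set (Fin k → ℤ) :=
  {w ∈ X | gdistK X 0 w + gdistK X w v ≤ t}

/-- Available information (local map); `none` plays the role of `Q`. -/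
noncomputable def aiK {k : ℕ} (v : Fin k → ℤ) (t : ℕ) (X : Set (Fin k → ℤ)) :
    Option (ℕ × (Fin k → ℤ) × Set ((Fin k → ℤ) × Set (Fin k → ℤ))) :=
  if v ∈ X ∧ (gridGraphK X).Reachable 0 v ∧ gdistK X 0 v ≤ t then
    some (t, v, (fun w => (w, bcondK X w)) '' MsetK v t X)
  else none

/-- `X ≡'_{t,v} Y`. -/
def equivAtK {k : ℕ} (t : ℕ) (v : Fin k → ℤ) (X Y : Set (Fin k → ℤ)) : Prop :=
  v ∈ X ∧ v ∈ Y ∧ aiK v t X = aiK v t Y ∧ aiK v t X ≠ none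

/-- `Y` is a consistent extension of the subset `M` of `X`. -/
def ConsExtK {k : ℕ} (X M Y : Set (Fin k → ℤ)) : Prop :=
  M ⊆ Y ∧ ∀ w ∈ M, bcondK X w = bcondK Y w

/-- A simple non-self-touching lattice path on the index interval `[r, s]`
through the origin (a g-kPATH configuration). -/
def IsPathOnK {k : ℕ} (p : ℤ → Fin k → ℤ) (r s : ℤ) : Prop :=
  r ≤ 0 ∧ 0 ≤ s ∧ p 0 = 0 ∧
    (∀ m, r ≤ m → m < s → adjK (p m) (p (m + 1))) ∧
    (∀ m n, r ≤ m → m ≤ s → r ≤ n → n ≤ s → p m = p n → m = n) ∧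
    (∀ m n, r ≤ m → m + 2 ≤ n → n ≤ s → ¬ adjK (p m) (p n))

/-- A configuration of g-kPATH. -/
structure GPathK (k : ℕ) where
  r : ℤ
  s : ℤ
  p : ℤ → Fin k → ℤ
  isPath : IsPathOnK p r s

def pathSetK {k : ℕ} (C : GPathK k) : Set (Fin k → ℤ) := C.p '' Set.Icc C.r C.s

namespace GPathK

variable {k : ℕ} (C : GPathK k)

lemma hr0 : C.r ≤ 0 := C.isPath.1
lemma hs0 : 0 ≤ C.s := C.isPath.2.1
lemma p0 : C.p 0 = 0 := C.isPath.2.2.1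

lemma inj {m n : ℤ} (h1 : C.r ≤ m) (h2 : m ≤ C.s) (h3 : C.r ≤ n) (h4 : n ≤ C.s)
    (h : C.p m = C.p n) : m = n := C.isPath.2.2.2.2.1 m n h1 h2 h3 h4 h

lemma mem_pathSet {i : ℤ} (h1 : C.r ≤ i) (h2 : i ≤ C.s) : C.p i ∈ pathSetK C :=
  ⟨i, Set.mem_Icc.mpr ⟨h1, h2⟩, rfl⟩

lemma exists_idx {x : Fin k → ℤ} (hx : x ∈ pathSetK C) :
    ∃ i, C.r ≤ i ∧ i ≤ C.s ∧ C.p i = x := by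
  obtain ⟨i, hi, hpi⟩ := hx
  exact ⟨i, (Set.mem_Icc.mp hi).1, (Set.mem_Icc.mp hi).2, hpi⟩

lemma adj_abs {m n : ℤ} (h1 : C.r ≤ m) (h2 : m ≤ C.s) (h3 : C.r ≤ n) (h4 : n ≤ C.s)
    (h : (m - n).natAbs = 1) : adjK (C.p m) (C.p n) := by
  have hcase : n = m + 1 ∨ m = n + 1 := by omega
  rcases hcase with h' | h'
  · subst h'; exact C.isPath.2.2.2.1 m h1 (by omega)
  · subst h'; exact adjK_symm (C.isPath.2.2.2.1 n h3 (by omega))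

lemma abs_of_adj {m n : ℤ} (h1 : C.r ≤ m) (h2 : m ≤ C.s) (h3 : C.r ≤ n) (h4 : n ≤ C.s)
    (h : adjK (C.p m) (C.p n)) : (m - n).natAbs = 1 := by
  by_contra hne
  have hcase : m = n ∨ m + 2 ≤ n ∨ n + 2 ≤ m := by omega
  rcases hcase with h' | h' | h'
  · subst h'; exact adjK_irrefl _ h
  · exact C.isPath.2.2.2.2.2 m n h1 h' h4 h
  · exact C.isPath.2.2.2.2.2 n m h3 h' h2 (adjK_symm h)

lemma grid_adj {m n : ℤ} (h1 : C.r ≤ m) (h2 : m ≤ C.s) (h3 : C.r ≤ n) (h4 : n ≤ C.s)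
    (h : (m - n).natAbs = 1) : (gridGraphK (pathSetK C)).Adj (C.p m) (C.p n) :=
  ⟨C.mem_pathSet h1 h2, C.mem_pathSet h3 h4, C.adj_abs h1 h2 h3 h4 h⟩

lemma exists_walk_ge {i : ℤ} (hi1 : C.r ≤ i) (hi2 : i ≤ C.s) :
    ∀ j, i ≤ j → j ≤ C.s →
      ∃ w : (gridGraphK (pathSetK C)).Walk (C.p i) (C.p j), w.length = (j - i).toNat := by
  intro j hj
  refine Int.le_induction (motive := fun j _ => j ≤ C.s →
    ∃ w : (gridGraphK (pathSetK C)).Walk (C.p i) (C.p j), w.length = (j - i).toNat)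
    ?_ ?_ j hj
  · intro _; exact ⟨SimpleGraph.Walk.nil, by simp⟩
  · intro j hij ih hjs
    obtain ⟨w, hw⟩ := ih (by omega)
    refine ⟨w.concat (C.grid_adj (by omega) (by omega) (by omega) hjs (by omega)), ?_⟩
    rw [SimpleGraph.Walk.length_concat, hw]; omega

lemma exists_walk {i j : ℤ} (h1 : C.r ≤ i) (h2 : i ≤ C.s) (h3 : C.r ≤ j) (h4 : j ≤ C.s) :
    ∃ w : (gridGraphK (pathSetK C)).Walk (C.p i) (C.p j), w.length = (i - j).natAbs := by
  rcases le_total i j with h | h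
  · obtain ⟨w, hw⟩ := C.exists_walk_ge h1 h2 j h h4
    exact ⟨w, by omega⟩
  · obtain ⟨w, hw⟩ := C.exists_walk_ge h3 h4 i h h2
    exact ⟨w.reverse, by rw [SimpleGraph.Walk.length_reverse, hw]; omega⟩

lemma reachable {i j : ℤ} (h1 : C.r ≤ i) (h2 : i ≤ C.s) (h3 : C.r ≤ j) (h4 : j ≤ C.s) :
    (gridGraphK (pathSetK C)).Reachable (C.p i) (C.p j) :=
  ⟨(C.exists_walk h1 h2 h3 h4).choose⟩

lemma walk_le {x y : Fin k → ℤ} (w : (gridGraphK (pathSetK C)).Walk x y) :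
    ∀ i j, C.r ≤ i → i ≤ C.s → C.r ≤ j → j ≤ C.s → C.p i = x → C.p j = y →
      (i - j).natAbs ≤ w.length := by
  induction w with
  | nil =>
    intro i j h1 h2 h3 h4 hx hy
    have := C.inj h1 h2 h3 h4 (by rw [hx, hy])
    simp [this]
  | @cons x z y h w ih =>
    intro i j h1 h2 h3 h4 hx hy
    obtain ⟨n, hn1, hn2, hz⟩ := C.exists_idx h.2.1
    have hadj : adjK (C.p i) (C.p n) := by rw [hx, hz]; exact h.2.2
    have h1' := C.abs_of_adj h1 h2 hn1 hn2 hadj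
    have h2' := ih n j hn1 hn2 h3 h4 hz hy
    rw [SimpleGraph.Walk.length_cons]
    omega

lemma dist_eq {i j : ℤ} (h1 : C.r ≤ i) (h2 : i ≤ C.s) (h3 : C.r ≤ j) (h4 : j ≤ C.s) :
    gdistK (pathSetK C) (C.p i) (C.p j) = (i - j).natAbs := by
  obtain ⟨w, hw⟩ := C.exists_walk h1 h2 h3 h4
  refine le_antisymm (hw ▸ SimpleGraph.dist_le w) ?_
  obtain ⟨w', hw'⟩ := (C.reachable h1 h2 h3 h4).exists_walk_length_eq_dist
  have := C.walk_le w' i j h1 h2 h3 h4 rfl rfl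
  rw [hw'] at this
  exact this

lemma mem_Mset_iff {u : ℤ} (hu1 : C.r ≤ u) (hu2 : u ≤ C.s) {t : ℕ} {i : ℤ}
    (h1 : C.r ≤ i) (h2 : i ≤ C.s) :
    C.p i ∈ MsetK (C.p u) t (pathSetK C) ↔ i.natAbs + (i - u).natAbs ≤ t := by
  have hz : (0 : Fin k → ℤ) = C.p 0 := C.p0.symm
  constructor
  · rintro ⟨-, hd⟩
    rw [hz, C.dist_eq C.hr0 C.hs0 h1 h2, C.dist_eq h1 h2 hu1 hu2] at hd
    omega
  · intro hd
    refine ⟨C.mem_pathSet h1 h2, ?_⟩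
    rw [hz, C.dist_eq C.hr0 C.hs0 h1 h2, C.dist_eq h1 h2 hu1 hu2]
    omega

end GPathK

lemma mem_MsetK {k : ℕ} {v x : Fin k → ℤ} {t : ℕ} {X : Set (Fin k → ℤ)} :
    x ∈ MsetK v t X ↔ x ∈ X ∧ gdistK X 0 x + gdistK X x v ≤ t := Iff.rfl

theorem stmt5 (k : ℕ) (hk : k = 2 ∨ k = 3) (C C' : GPathK k) (u : ℤ)
    (hu1 : C.r ≤ u) (hu2 : u ≤ C.s) (t : ℕ)
    (ht : gdistK (pathSetK C) 0 (C.p u) ≤ t) :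
    equivAtK t (C.p u) (pathSetK C) (pathSetK C') ↔
      ConsExtK (pathSetK C) (MsetK (C.p u) t (pathSetK C)) (pathSetK C') := by
  classical
  constructor
  · -- easy direction
    rintro ⟨hvX, hvY, heq, hne⟩
    have hne' : aiK (C.p u) t (pathSetK C') ≠ none := by rw [← heq]; exact hne
    have cX : (C.p u) ∈ pathSetK C ∧ (gridGraphK (pathSetK C)).Reachable 0 (C.p u) ∧
        gdistK (pathSetK C) 0 (C.p u) ≤ t := by
      by_contra h
      exact hne (by simp only [aiK, if_neg h])
    have cY : (C.p u) ∈ pathSetK C' ∧ (gridGraphK (pathSetK C')).Reachable 0 (C.p u) ∧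
        gdistK (pathSetK C') 0 (C.p u) ≤ t := by
      by_contra h
      exact hne' (by simp only [aiK, if_neg h])
    have hIm : (fun w => (w, bcondK (pathSetK C) w)) '' MsetK (C.p u) t (pathSetK C)
        = (fun w => (w, bcondK (pathSetK C') w)) '' MsetK (C.p u) t (pathSetK C') := by
      simp only [aiK, if_pos cX, if_pos cY, Option.some.injEq, Prod.mk.injEq] at heq
      exact heq.2.2
    constructor
    · intro w hw
      have hmem : (w, bcondK (pathSetK C) w) ∈
          (fun w => (w, bcondK (pathSetK C) w)) '' MsetK (C.p u) t (pathSetK C) :=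
        Set.mem_image_of_mem _ hw
      rw [hIm] at hmem
      obtain ⟨w', hw', hp⟩ := hmem
      have h1 : w' = w := congrArg Prod.fst hp
      rw [← h1]
      exact (mem_MsetK.1 hw').1
    · intro w hw
      have hmem : (w, bcondK (pathSetK C) w) ∈
          (fun w => (w, bcondK (pathSetK C) w)) '' MsetK (C.p u) t (pathSetK C) :=
        Set.mem_image_of_mem _ hw
      rw [hIm] at hmem
      obtain ⟨w', hw', hp⟩ := hmem
      have h1 : w' = w := congrArg Prod.fst hp
      have h2 : bcondK (pathSetK C') w' = bcondK (pathSetK C) w := congrArg Prod.snd hp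
      rw [h1] at h2
      exact h2.symm
  · -- hard direction
    rintro ⟨hMY, hbc⟩
    have hz : (0 : Fin k → ℤ) = C.p 0 := C.p0.symm
    have htu : u.natAbs ≤ t := by
      rw [hz, C.dist_eq C.hr0 C.hs0 hu1 hu2] at ht; omega
    set F : Finset ℤ :=
      (Finset.Icc C.r C.s).filter (fun i => i.natAbs + (i - u).natAbs ≤ t) with hF
    have hmemF : ∀ i, i ∈ F ↔ (C.r ≤ i ∧ i ≤ C.s ∧ i.natAbs + (i - u).natAbs ≤ t) := by
      intro i
      simp [hF, Finset.mem_filter, Finset.mem_Icc, and_assoc]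
    have h0F : (0 : ℤ) ∈ F := (hmemF 0).2 ⟨C.hr0, C.hs0, by omega⟩
    have huF : u ∈ F := (hmemF u).2 ⟨hu1, hu2, by omega⟩
    have hFne : F.Nonempty := ⟨0, h0F⟩
    set a := F.min' hFne with ha_def
    set b := F.max' hFne with hb_def
    have haF := (hmemF a).1 (F.min'_mem hFne)
    have hbF := (hmemF b).1 (F.max'_mem hFne)
    have ha0 : a ≤ 0 := F.min'_le 0 h0F
    have hau : a ≤ u := F.min'_le u huF
    have hb0 : (0:ℤ) ≤ b := F.le_max' 0 h0F
    have hbu : u ≤ b := F.le_max' u huF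
    have hab' : a ≤ b := le_trans ha0 hb0
    have hconv : ∀ i, a ≤ i → i ≤ b →
        (C.r ≤ i ∧ i ≤ C.s ∧ i.natAbs + (i - u).natAbs ≤ t) := by
      intro i h1 h2
      obtain ⟨ha1, ha2, ha3⟩ := haF
      obtain ⟨hb1, hb2, hb3⟩ := hbF
      exact ⟨by omega, by omega, by omega⟩
    have hout : ∀ i, C.r ≤ i → i ≤ C.s → ¬(a ≤ i ∧ i ≤ b) →
        t + 1 ≤ i.natAbs + (i - u).natAbs := by
      intro i h1 h2 h3
      by_contra h
      have hiF : i ∈ F := (hmemF i).2 ⟨h1, h2, by omega⟩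
      exact h3 ⟨F.min'_le i hiF, F.le_max' i hiF⟩
    have hMchar : ∀ x, x ∈ MsetK (C.p u) t (pathSetK C) ↔
        ∃ i, a ≤ i ∧ i ≤ b ∧ C.p i = x := by
      intro x
      constructor
      · intro hx
        obtain ⟨i, h1, h2, h3⟩ := C.exists_idx (mem_MsetK.1 hx).1
        rw [← h3] at hx
        have := (C.mem_Mset_iff hu1 hu2 h1 h2).1 hx
        have hiF : i ∈ F := (hmemF i).2 ⟨h1, h2, this⟩
        exact ⟨i, F.min'_le i hiF, F.le_max' i hiF, h3⟩
      · rintro ⟨i, h1, h2, rfl⟩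
        obtain ⟨hc1, hc2, hc3⟩ := hconv i h1 h2
        exact (C.mem_Mset_iff hu1 hu2 hc1 hc2).2 hc3
    -- the indexing map of M inside C'
    have hgex : ∀ i : ℤ, ∃ m : ℤ, a ≤ i → i ≤ b →
        (C'.r ≤ m ∧ m ≤ C'.s ∧ C'.p m = C.p i) := by
      intro i
      by_cases hi : a ≤ i ∧ i ≤ b
      · have hx : C.p i ∈ pathSetK C' := hMY ((hMchar _).2 ⟨i, hi.1, hi.2, rfl⟩)
        obtain ⟨m, hm1, hm2, hm3⟩ := C'.exists_idx hx
        exact ⟨m, fun _ _ => ⟨hm1, hm2, hm3⟩⟩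
      · exact ⟨0, fun h1 h2 => absurd ⟨h1, h2⟩ hi⟩
    choose g hg using hgex
    have hstep : ∀ i, a ≤ i → i < b → (g (i + 1) - g i).natAbs = 1 := by
      intro i h1 h2
      obtain ⟨hi1, hi2, hi3⟩ := hg i h1 (by omega)
      obtain ⟨hj1, hj2, hj3⟩ := hg (i + 1) (by omega) (by omega)
      obtain ⟨hc1, hc2, hc3⟩ := hconv i h1 (by omega)
      obtain ⟨hd1, hd2, hd3⟩ := hconv (i + 1) (by omega) (by omega)
      have hadj : adjK (C'.p (g i)) (C'.p (g (i + 1))) := by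
        rw [hi3, hj3]
        exact C.adj_abs hc1 hc2 hd1 hd2 (by omega)
      have := C'.abs_of_adj hi1 hi2 hj1 hj2 hadj
      omega
    set ε : ℤ := if a < b then g (a + 1) - g a else 1 with hε_def
    have hε : ε = 1 ∨ ε = -1 := by
      by_cases hab : a < b
      · have := hstep a (le_refl a) hab
        rw [hε_def, if_pos hab]
        omega
      · rw [hε_def, if_neg hab]; left; rfl
    have hsucc : ∀ i, a ≤ i → i < b → g (i + 1) = g i + ε := by
      intro i hi
      refine Int.le_induction (motive := fun i _ => i < b → g (i + 1) = g i + ε) ?_ ?_ i hi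
      · intro hab
        rw [hε_def, if_pos hab]
        ring
      · intro i hai ih hib
        have e1 := ih (by omega)
        have e2 := hstep (i + 1) (by omega) hib
        by_contra hne
        have hgeq : g (i + 1 + 1) = g i := by rcases hε with h | h <;> omega
        have p1 := (hg (i + 1 + 1) (by omega) (by omega)).2.2
        have p2 := (hg i (by omega) (by omega)).2.2
        rw [hgeq, p2] at p1
        obtain ⟨hc1, hc2, hc3⟩ := hconv i (by omega) (by omega)
        obtain ⟨hd1, hd2, hd3⟩ := hconv (i + 1 + 1) (by omega) (by omega)
        have := C.inj hc1 hc2 hd1 hd2 p1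
        omega
    have hlin : ∀ i, a ≤ i → i ≤ b → g i = g a + ε * (i - a) := by
      intro i hi
      refine Int.le_induction (motive := fun i _ => i ≤ b → g i = g a + ε * (i - a)) ?_ ?_ i hi
      · intro _; ring
      · intro i hai ih hib
        rw [hsucc i hai (by omega), ih (by omega)]
        ring
    have hdiff : ∀ i j, a ≤ i → i ≤ b → a ≤ j → j ≤ b →
        (g i - g j).natAbs = (i - j).natAbs := by
      intro i j h1 h2 h3 h4
      have e : g i - g j = ε * (i - j) := by rw [hlin i h1 h2, hlin j h3 h4]; ring
      rcases hε with h | h <;> rw [h] at e <;> omega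
    have hpack : ∃ lo hi : ℤ, (a ≤ lo ∧ lo ≤ b) ∧ (a ≤ hi ∧ hi ≤ b) ∧
        (∀ i, a ≤ i → i ≤ b → g lo ≤ g i ∧ g i ≤ g hi) ∧
        (∀ m, g lo ≤ m → m ≤ g hi → ∃ i, a ≤ i ∧ i ≤ b ∧ g i = m) := by
      have eb := hlin b hab' (le_refl b)
      rcases hε with h | h <;> rw [h] at eb
      · refine ⟨a, b, ⟨le_refl a, hab'⟩, ⟨hab', le_refl b⟩, ?_, ?_⟩
        · intro i h1 h2
          have ei := hlin i h1 h2
          rw [h] at ei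
          omega
        · intro m hm1 hm2
          refine ⟨a + (m - g a), by omega, by omega, ?_⟩
          have := hlin (a + (m - g a)) (by omega) (by omega)
          rw [h] at this
          omega
      · refine ⟨b, a, ⟨hab', le_refl b⟩, ⟨le_refl a, hab'⟩, ?_, ?_⟩
        · intro i h1 h2
          have ei := hlin i h1 h2
          rw [h] at ei
          omega
        · intro m hm1 hm2
          refine ⟨a + (g a - m), by omega, by omega, ?_⟩
          have := hlin (a + (g a - m)) (by omega) (by omega)
          rw [h] at this
          omega
    obtain ⟨lo, hi, hlo, hhi, hmono, hsurj⟩ := hpack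
    -- boundary estimate
    have hbnd : ∀ β d : ℤ, a ≤ β → β ≤ b → (d = 1 ∨ d = -1) →
        (∀ i, a ≤ i → i ≤ b → g i ≠ g β + d) → C'.r ≤ g β + d → g β + d ≤ C'.s →
        (t : ℕ) ≤ β.natAbs + (β - u).natAbs + 1 := by
      intro β d hβ1 hβ2 hd hnot hd1 hd2
      obtain ⟨hgβ1, hgβ2, hgβ3⟩ := hg β hβ1 hβ2
      obtain ⟨hc1, hc2, hc3⟩ := hconv β hβ1 hβ2
      have hadj' : adjK (C'.p (g β)) (C'.p (g β + d)) := by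
        refine C'.adj_abs hgβ1 hgβ2 hd1 hd2 ?_
        rcases hd with h | h <;> omega
      have hβM : C.p β ∈ MsetK (C.p u) t (pathSetK C) := (hMchar _).2 ⟨β, hβ1, hβ2, rfl⟩
      have hq : C'.p (g β + d) ∈ bcondK (pathSetK C') (C.p β) := by
        refine ⟨C'.mem_pathSet hd1 hd2, ?_⟩
        rw [← hgβ3]
        exact hadj'
      rw [← hbc _ hβM] at hq
      obtain ⟨hqX, hqadj⟩ := hq
      obtain ⟨n, hn1, hn2, hn3⟩ := C.exists_idx hqX
      have hadjn : adjK (C.p β) (C.p n) := by rw [hn3]; exact hqadj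
      have habs : (β - n).natAbs = 1 := C.abs_of_adj hc1 hc2 hn1 hn2 hadjn
      have hnab : ¬ (a ≤ n ∧ n ≤ b) := by
        rintro ⟨h1, h2⟩
        obtain ⟨hm1, hm2, hm3⟩ := hg n h1 h2
        have hpe : C'.p (g n) = C'.p (g β + d) := by rw [hm3, hn3]
        exact hnot n h1 h2 (C'.inj hm1 hm2 hd1 hd2 hpe)
      have h5 := hout n hn1 hn2 hnab
      omega
    -- exterior estimate
    have hext : ∀ j, C'.r ≤ j → j ≤ C'.s → (∀ i, a ≤ i → i ≤ b → g i ≠ j) →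
        t + 1 ≤ (g 0 - j).natAbs + (j - g u).natAbs := by
      intro j hj1 hj2 hnot
      have hj' : j < g lo ∨ g hi < j := by
        by_contra hcon
        push_neg at hcon
        obtain ⟨i, h1, h2, h3⟩ := hsurj j (by omega) (by omega)
        exact hnot i h1 h2 h3
      have h0m := hmono 0 ha0 hb0
      have hum := hmono u hau hbu
      rcases hj' with hcase | hcase
      · have hb' : (t : ℕ) ≤ lo.natAbs + (lo - u).natAbs + 1 := by
          refine hbnd lo (-1) hlo.1 hlo.2 (Or.inr rfl) ?_ ?_ ?_
          · intro i h1 h2 hgi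
            have := (hmono i h1 h2).1
            omega
          · omega
          · have := (hg lo hlo.1 hlo.2).2.1
            omega
        have hd0 : (g 0 - g lo).natAbs = (0 - lo).natAbs := hdiff 0 lo ha0 hb0 hlo.1 hlo.2
        have hdu : (g u - g lo).natAbs = (u - lo).natAbs := hdiff u lo hau hbu hlo.1 hlo.2
        omega
      · have hb' : (t : ℕ) ≤ hi.natAbs + (hi - u).natAbs + 1 := by
          refine hbnd hi 1 hhi.1 hhi.2 (Or.inl rfl) ?_ ?_ ?_
          · intro i h1 h2 hgi
            have := (hmono i h1 h2).2
            omega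
          · have := (hg hi hhi.1 hhi.2).1
            omega
          · omega
        have hd0 : (g 0 - g hi).natAbs = (0 - hi).natAbs := hdiff 0 hi ha0 hb0 hhi.1 hhi.2
        have hdu : (g u - g hi).natAbs = (u - hi).natAbs := hdiff u hi hau hbu hhi.1 hhi.2
        omega
    -- basic rewrites on C' side
    obtain ⟨hg01, hg02, hg03⟩ := hg 0 ha0 hb0
    obtain ⟨hgu1, hgu2, hgu3⟩ := hg u hau hbu
    have e0 : (0 : Fin k → ℤ) = C'.p (g 0) := by rw [hg03, C.p0]
    have ev : C.p u = C'.p (g u) := hgu3.symm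
    -- the two M-sets coincide
    have hMset_eq : MsetK (C.p u) t (pathSetK C') = MsetK (C.p u) t (pathSetK C) := by
      ext x
      constructor
      · intro hx
        obtain ⟨hxY, hxd⟩ := mem_MsetK.1 hx
        obtain ⟨j, hj1, hj2, hj3⟩ := C'.exists_idx hxY
        by_cases hcase : ∃ i, a ≤ i ∧ i ≤ b ∧ g i = j
        · obtain ⟨i, h1, h2, h3⟩ := hcase
          have : C.p i = x := by rw [← (hg i h1 h2).2.2, h3, hj3]
          exact (hMchar x).2 ⟨i, h1, h2, this⟩
        · exfalso
          push_neg at hcase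
          have hge := hext j hj1 hj2 hcase
          rw [e0, ev, ← hj3, C'.dist_eq hg01 hg02 hj1 hj2,
            C'.dist_eq hj1 hj2 hgu1 hgu2] at hxd
          omega
      · intro hx
        obtain ⟨i, h1, h2, h3⟩ := (hMchar x).1 hx
        obtain ⟨hgi1, hgi2, hgi3⟩ := hg i h1 h2
        have hxY : x ∈ pathSetK C' := hMY hx
        refine mem_MsetK.2 ⟨hxY, ?_⟩
        have hxe : x = C'.p (g i) := by rw [hgi3, h3]
        rw [e0, ev, hxe, C'.dist_eq hg01 hg02 hgi1 hgi2, C'.dist_eq hgi1 hgi2 hgu1 hgu2]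
        have hd0 : (g 0 - g i).natAbs = (0 - i).natAbs := hdiff 0 i ha0 hb0 h1 h2
        have hdu : (g i - g u).natAbs = (i - u).natAbs := hdiff i u h1 h2 hau hbu
        have := (hconv i h1 h2).2.2
        omega
    -- conditions for `aiK` being defined
    have cX : (C.p u) ∈ pathSetK C ∧ (gridGraphK (pathSetK C)).Reachable 0 (C.p u) ∧
        gdistK (pathSetK C) 0 (C.p u) ≤ t := by
      refine ⟨C.mem_pathSet hu1 hu2, ?_, ht⟩
      rw [hz]
      exact C.reachable C.hr0 C.hs0 hu1 hu2
    have hvM : C.p u ∈ MsetK (C.p u) t (pathSetK C) := (hMchar _).2 ⟨u, hau, hbu, rfl⟩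
    have cY : (C.p u) ∈ pathSetK C' ∧ (gridGraphK (pathSetK C')).Reachable 0 (C.p u) ∧
        gdistK (pathSetK C') 0 (C.p u) ≤ t := by
      refine ⟨hMY hvM, ?_, ?_⟩
      · rw [e0, ev]
        exact C'.reachable hg01 hg02 hgu1 hgu2
      · rw [e0, ev, C'.dist_eq hg01 hg02 hgu1 hgu2]
        have := hdiff 0 u ha0 hb0 hau hbu
        omega
    refine ⟨cX.1, cY.1, ?_, ?_⟩
    · simp only [aiK, if_pos cX, if_pos cY, hMset_eq]
      have himg : (fun w => (w, bcondK (pathSetK C) w)) '' MsetK (C.p u) t (pathSetK C)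
          = (fun w => (w, bcondK (pathSetK C') w)) '' MsetK (C.p u) t (pathSetK C) :=
        Set.image_congr fun w hw => by rw [hbc w hw]
      rw [himg]
    · simp only [aiK, if_pos cX]
      simp
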